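/- If ⟨F, ⊆⟩ is a countable dense linear order of subsets of I₀ (between any two distinct comparable members there is a third, and F has at least two elements), then the closure Cl(F) = F ∪ {J : for every finite J₀ ⊆ I₀, infinitely many I ∈ F satisfy I ∩ J₀ = J ∩ J₀} has cardinality at least 2^ℵ₀. -/

import Mathlib

/-- Combinatorial closure on families of index sets (Corollary 4.7 of the paper):
`J` is in the closure of `F` iff `J ∈ F` or for every finite `J₀` infinitely many
members of `F` agree with `J` on `J₀`. -/
def Cl {I₀ : Type*} (F : Set (Set I₀)) : Set (Set I₀) :=
  F ∪ {J | ∀ J₀ : Finset I₀, {I ∈ F | I ∩ ↑J₀ = J ∩ ↑J₀}.Infinite}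

/-- Proposition 4.9: the closure of a countable dense chain (with infinite
differences) has cardinality at least continuum. -/
theorem dense_Cl_continuum {I₀ : Type*} [Infinite I₀]
    (F : Set (Set I₀)) (hchain : IsChain (· ⊆ ·) F)
    (hcount : F.Countable)
    (hdense : ∀ A ∈ F, ∀ B ∈ F, A ⊂ B → ∃ C ∈ F, A ⊂ C ∧ C ⊂ B)
    (hdiff : ∀ A ∈ F, ∀ B ∈ F, A ⊂ B → (B \ A).Infinite)
    (hnontriv : ∃ A ∈ F, ∃ B ∈ F, A ≠ B) :
    Cardinal.continuum ≤ Cardinal.mk ↥(Cl F) := by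
  classical
  -- Get a strict pair A ⊂ B in F.
  obtain ⟨A, hA, B, hB, hAB⟩ : ∃ A ∈ F, ∃ B ∈ F, A ⊂ B := by
    obtain ⟨A, hA, B, hB, hAB⟩ := hnontriv
    rcases hchain hA hB hAB with h | h
    · exact ⟨A, hA, B, hB, ssubset_of_subset_of_ne h hAB⟩
    · exact ⟨B, hB, A, hA, ssubset_of_subset_of_ne h hAB.symm⟩
  -- The open interval (A, B) in F.
  set S : Set (Set I₀) := {X | X ∈ F ∧ A ⊂ X ∧ X ⊂ B} with hSdef
  have hSsub : S ⊆ F := fun X hX => hX.1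
  have hmemS : ∀ {C : Set I₀}, C ∈ F → A ⊂ C → C ⊂ B → C ∈ S := fun h1 h2 h3 => ⟨h1, h2, h3⟩
  have hltcoe : ∀ {X Y : ↥S}, X < Y ↔ (X : Set I₀) ⊂ (Y : Set I₀) := by
    intro X Y
    rw [← Subtype.coe_lt_coe, Set.lt_iff_ssubset]
  letI : LinearOrder ↥S :=
    { (inferInstance : PartialOrder ↥S) with
      le_total := by
        rintro ⟨X, hX⟩ ⟨Y, hY⟩
        rcases eq_or_ne X Y with h | h
        · exact Or.inl (le_of_eq (Subtype.ext h))
        · rcases hchain hX.1 hY.1 h with h' | h'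
          · exact Or.inl h'
          · exact Or.inr h'
      toDecidableLE := Classical.decRel _ }
  haveI : Countable ↥S := (hcount.mono hSsub).to_subtype
  haveI : Nonempty ↥S := by
    obtain ⟨C, hCF, h1, h2⟩ := hdense A hA B hB hAB
    exact ⟨⟨C, hmemS hCF h1 h2⟩⟩
  haveI : DenselyOrdered ↥S := by
    constructor
    rintro ⟨X, hX⟩ ⟨Y, hY⟩ h
    rw [hltcoe] at h
    obtain ⟨C, hCF, h1, h2⟩ := hdense X hX.1 Y hY.1 h
    refine ⟨⟨C, hmemS hCF (hX.2.1.trans h1) (h2.trans hY.2.2)⟩, ?_, ?_⟩ <;>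
      rw [hltcoe] <;> assumption
  haveI : NoMinOrder ↥S := by
    constructor
    rintro ⟨X, hX⟩
    obtain ⟨C, hCF, h1, h2⟩ := hdense A hA X hX.1 hX.2.1
    exact ⟨⟨C, hmemS hCF h1 (h2.trans hX.2.2)⟩, hltcoe.2 h2⟩
  haveI : NoMaxOrder ↥S := by
    constructor
    rintro ⟨X, hX⟩
    obtain ⟨C, hCF, h1, h2⟩ := hdense X hX.1 B hB hX.2.2
    exact ⟨⟨C, hmemS hCF (hX.2.1.trans h1) h2⟩, hltcoe.2 h1⟩
  obtain ⟨e⟩ := Order.iso_of_countable_dense ℚ ↥S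
  -- The chain indexed by the rationals.
  set g : ℚ → Set I₀ := fun q => ((e q : ↥S) : Set I₀) with hgdef
  have hgF : ∀ q, g q ∈ F := fun q => (e q).2.1
  have hgmono : ∀ {q q' : ℚ}, q ≤ q' → g q ⊆ g q' := by
    intro q q' h
    exact Subtype.coe_le_coe.2 (e.monotone h)
  have hgstrict : ∀ {q q' : ℚ}, q < q' → g q ⊂ g q' := by
    intro q q' h
    exact hltcoe.1 (e.strictMono h)
  have hginj : Function.Injective g := fun q q' h =>
    e.injective (Subtype.ext h)
  -- The continuum-many limits.
  set f : ℝ → Set I₀ := fun r => ⋃ q ∈ {q : ℚ | (q : ℝ) < r}, g q with hfdef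
  have hsub : ∀ {q : ℚ} {r : ℝ}, (q : ℝ) < r → g q ⊆ f r := by
    intro q r h
    exact Set.subset_biUnion_of_mem (u := g) h
  have hsup : ∀ {q : ℚ} {r : ℝ}, r ≤ (q : ℝ) → f r ⊆ g q := by
    intro q r h
    refine Set.iUnion₂_subset fun p hp => hgmono ?_
    exact_mod_cast le_of_lt (lt_of_lt_of_le hp h)
  -- Each f r is in the closure.
  have hfCl : ∀ r : ℝ, f r ∈ Cl F := by
    intro r
    refine Or.inr fun J₀ => ?_
    obtain ⟨q₀, hq₀⟩ := exists_rat_lt r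
    -- For each element of J₀ ∩ f r pick a witness rational.
    set φ : I₀ → ℚ := fun x =>
      if h : ∃ q : ℚ, (q : ℝ) < r ∧ x ∈ g q then h.choose else q₀ with hφdef
    have hφlt : ∀ x, (φ x : ℝ) < r := by
      intro x
      have hrfl : φ x = if h : ∃ q : ℚ, (q : ℝ) < r ∧ x ∈ g q then h.choose else q₀ := rfl
      rcases em (∃ q : ℚ, (q : ℝ) < r ∧ x ∈ g q) with h | h
      · rw [hrfl, dif_pos h]; exact h.choose_spec.1
      · rw [hrfl, dif_neg h]; exact hq₀
    set Q : Finset ℚ := insert q₀ (J₀.image φ) with hQdef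
    set p : ℚ := Q.max' ⟨q₀, Finset.mem_insert_self _ _⟩ with hpdef
    have hplt : (p : ℝ) < r := by
      have hpQ : p ∈ Q := Finset.max'_mem _ _
      rw [hQdef] at hpQ
      rcases Finset.mem_insert.1 hpQ with h | h
      · rw [h]; exact hq₀
      · obtain ⟨x, _, hx⟩ := Finset.mem_image.1 h
        rw [← hx]; exact hφlt x
    have hcap : ∀ x ∈ (J₀ : Set I₀), x ∈ f r → x ∈ g p := by
      intro x hxJ hxf
      have hex : ∃ q : ℚ, (q : ℝ) < r ∧ x ∈ g q := by
        simp only [hfdef, Set.mem_iUnion, Set.mem_setOf_eq] at hxf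
        obtain ⟨q, hq1, hq2⟩ := hxf
        exact ⟨q, hq1, hq2⟩
      have hφx : x ∈ g (φ x) := by
        have hrfl : φ x = if h : ∃ q : ℚ, (q : ℝ) < r ∧ x ∈ g q then h.choose else q₀ := rfl
        rw [hrfl, dif_pos hex]; exact hex.choose_spec.2
      have hle : φ x ≤ p :=
        Finset.le_max' _ _ (Finset.mem_insert_of_mem
          (Finset.mem_image_of_mem φ (by exact_mod_cast hxJ)))
      exact hgmono hle hφx
    -- infinitely many rationals between p and r
    obtain ⟨q₁, hq₁1, hq₁2⟩ := exists_rat_btwn hplt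
    have hpq₁ : p < q₁ := by exact_mod_cast hq₁1
    have hIoo : (Set.Ioo p q₁).Infinite := Set.Ioo_infinite hpq₁
    have himg : (g '' Set.Ioo p q₁).Infinite :=
      hIoo.image (Set.injOn_of_injective hginj)
    refine himg.mono ?_
    rintro _ ⟨q, hq, rfl⟩
    have hqr : (q : ℝ) < r := lt_trans (by exact_mod_cast hq.2) hq₁2
    refine ⟨hgF q, ?_⟩
    apply Set.Subset.antisymm
    · exact Set.inter_subset_inter_left _ (hsub hqr)
    · rintro x ⟨hx1, hx2⟩
      exact ⟨hgmono (le_of_lt hq.1) (hcap x hx2 hx1), hx2⟩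
  -- f is strictly increasing, hence injective.
  have hfstrict : ∀ {r r' : ℝ}, r < r' → f r ⊂ f r' := by
    intro r r' h
    obtain ⟨q, hq1, hq2⟩ := exists_rat_btwn h
    obtain ⟨q', hq'1, hq'2⟩ := exists_rat_btwn hq2
    have hqq' : q < q' := by exact_mod_cast hq'1
    have hx := hdiff (g q) (hgF q) (g q') (hgF q') (hgstrict hqq')
    obtain ⟨x, hx1, hx2⟩ := hx.nonempty
    constructor
    · refine Set.iUnion₂_subset fun p hp => hsub (lt_trans hp h)
    · intro hcon
      exact hx2 (hsup (le_of_lt hq1) (hcon (hsub hq'2 hx1)))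
  have hfinj : Function.Injective f := by
    intro r r' h
    by_contra hne
    rcases lt_or_gt_of_ne hne with h' | h'
    · exact (hfstrict h').ne h
    · exact (hfstrict h').ne h.symm
  -- Conclude.
  have hinj2 : Function.Injective (fun r : ULift ℝ => (⟨f r.down, hfCl r.down⟩ : ↥(Cl F))) := by
    intro r r' h
    exact ULift.ext _ _ (hfinj (congrArg Subtype.val h))
  calc Cardinal.continuum = Cardinal.mk (ULift ℝ) := by
        rw [Cardinal.mk_uLift, Cardinal.mk_real, Cardinal.lift_continuum]
    _ ≤ Cardinal.mk ↥(Cl F) := Cardinal.mk_le_of_injective hinj2
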